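/- Assume β ≠ 0. Then (RS − SR)X and (RS − SR)Y are scalar multiples of W if and only if μ = 0 and β²ν² = −(4c + λν)(α(λ − ν) − β²). -/

import Mathlib

open Matrix

/-- The wedge operator `(u ∧ v)w = ⟨v,w⟩u − ⟨u,w⟩v` as a 3×3 matrix. -/
def wedge3 (u v : Fin 3 → ℝ) : Matrix (Fin 3) (Fin 3) ℝ :=
  Matrix.vecMulVec u v - Matrix.vecMulVec v u

lemma mult_W_iff (v : Fin 3 → ℝ) :
    (∃ t : ℝ, v = t • ![(1:ℝ), 0, 0]) ↔ (v 1 = 0 ∧ v 2 = 0) := by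
  constructor
  · rintro ⟨t, rfl⟩
    simp
  · rintro ⟨h1, h2⟩
    refine ⟨v 0, ?_⟩
    funext i
    fin_cases i <;> simp [h1, h2]

/-- if β ≠ 0, then (RS − SR)X and (RS − SR)Y are multiples of W iff
μ = 0 and β²ν² = −(4c + λν)(α(λ − ν) − β²). -/
theorem pseudo_ryan_refined
    (α β lam μ ν c : ℝ) (hc : c ≠ 0) (hβ : β ≠ 0)
    (W X Y : Fin 3 → ℝ)
    (hWdef : W = ![1, 0, 0]) (hXdef : X = ![0, 1, 0]) (hYdef : Y = ![0, 0, 1])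
    (A φ S R : Matrix (Fin 3) (Fin 3) ℝ)
    (hA : A = !![α, β, 0; β, lam, μ; 0, μ, ν])
    (hφ : φ = !![0, 0, 0; 0, 0, -1; 0, 1, 0])
    (hS : S = (5 * c) • (1 : Matrix (Fin 3) (Fin 3) ℝ) - (3 * c) • Matrix.vecMulVec W W
        + (α + lam + ν) • A - A * A)
    (hR : R = wedge3 (A.mulVec X) (A.mulVec Y)
        + c • (wedge3 X Y + wedge3 (φ.mulVec X) (φ.mulVec Y) + (2 * (X ⬝ᵥ φ.mulVec Y)) • φ)) :
    ((∃ t : ℝ, (R * S - S * R).mulVec X = t • W) ∧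
     (∃ t : ℝ, (R * S - S * R).mulVec Y = t • W)) ↔
    (μ = 0 ∧ β ^ 2 * ν ^ 2 = -(4 * c + lam * ν) * (α * (lam - ν) - β ^ 2)) := by
  subst hWdef hXdef hYdef hA hφ hS hR
  rw [mult_W_iff, mult_W_iff]
  norm_num [Matrix.mulVec, dotProduct, Fin.sum_univ_three, wedge3,
    Matrix.mul_apply, Matrix.vecMulVec_apply, Matrix.one_apply, Fin.ext_iff,
    Matrix.vecHead, Matrix.vecTail, Matrix.cons_val_two, Matrix.cons_val_one, Matrix.cons_val_zero, Matrix.head_cons, Matrix.tail_cons]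
  constructor
  · rintro ⟨⟨h1, h2⟩, h3, h4⟩
    have hfac : μ * (β ^ 2 * ν - α * (4 * c + lam * ν - μ ^ 2)) = 0 := by
      first
        | linear_combination (-(1:ℝ)/2) * h1
        | linear_combination ((1:ℝ)/2) * h1
    rcases mul_eq_zero.mp hfac with hm | hK
    · refine ⟨hm, ?_⟩
      first
        | linear_combination -h2 + α * (lam - ν) * μ * hm
        | linear_combination h2 + α * (lam - ν) * μ * hm
        | linear_combination -h3 + α * (lam - ν) * μ * hm
        | linear_combination h3 + α * (lam - ν) * μ * hm
    · exfalso
      have h4c : 4 * (β ^ 2 * c) = 0 := by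
        first
          | linear_combination h2 - (lam - ν) * hK
          | linear_combination -h2 - (lam - ν) * hK
          | linear_combination h2 + (lam - ν) * hK
          | linear_combination -h2 + (lam - ν) * hK
      have : β ^ 2 * c ≠ 0 := mul_ne_zero (pow_ne_zero _ hβ) hc
      apply this
      linarith
  · rintro ⟨hm, heq⟩
    subst hm
    refine ⟨⟨by ring_nf, ?_⟩, ?_, by ring_nf⟩ <;>
      first
        | linear_combination heq
        | linear_combination -heq
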